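/- Let F be a field of characteristic zero, V a finite-dimensional F-vector space, and Q a nondegenerate quadratic form on V. Then every element g of GPin(V) is homogeneous for the ℤ/2-grading of the Clifford algebra: either g lies in the even part C⁺(V) or g lies in the odd part C⁻(V) (in Mathlib terms, g ∈ evenOdd Q 0 or g ∈ evenOdd Q 1). In particular the sign character sign : GPin(V) → {±1}, equal to +1 on GPin(V) ∩ C⁺(V) and −1 on GPin(V) ∩ C⁻(V), is well defined. -/

import Mathlib

open CliffordAlgebra

section Aux

variable {F V : Type*} [Field F] [AddCommGroup V] [Module F V]

/-- The basic super-commutation identity in a Clifford algebra. -/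
theorem aux_iota_mul (Q : QuadraticForm F V) (v : V) (x : CliffordAlgebra Q) :
    ι Q v * x = involute x * ι Q v + contractLeft (Q.polarBilin v) x := by
  induction x using CliffordAlgebra.left_induction with
  | algebraMap r =>
    simp [Algebra.commutes]
  | add x y hx hy =>
    simp only [mul_add, map_add, add_mul]
    rw [hx, hy]; abel
  | ι_mul x m hx =>
    rw [← mul_assoc, ι_mul_ι_comm, sub_mul, mul_assoc, hx, map_mul, involute_ι,
      contractLeft_ι_mul, mul_add, ← Algebra.smul_def, QuadraticMap.polarBilin_apply_apply]
    rw [neg_mul, neg_mul, mul_assoc]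
    abel

/-- The number operator acts on the `k`-th graded piece of the exterior algebra as
multiplication by `k`. -/
theorem aux_N {n : ℕ} (b : Module.Basis (Fin n) F V) (k : ℕ)
    (x : CliffordAlgebra (0 : QuadraticForm F V))
    (hx : x ∈ LinearMap.range (ι (0 : QuadraticForm F V)) ^ k) :
    ∑ i, ι (0 : QuadraticForm F V) (b i) * contractLeft (b.coord i) x = (k : F) • x := by
  induction hx using Submodule.pow_induction_on_left' with
  | algebraMap r =>
    simp
  | add x y i hx hy ihx ihy =>
    simp only [map_add, mul_add, Finset.sum_add_distrib, ihx, ihy, smul_add]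
  | mem_mul m hm i x hx ih =>
    obtain ⟨v, rfl⟩ := hm
    have anti : ∀ u w : V, ι (0 : QuadraticForm F V) u * ι (0 : QuadraticForm F V) w
        = - (ι (0 : QuadraticForm F V) w * ι (0 : QuadraticForm F V) u) := by
      intro u w
      rw [ι_mul_ι_comm]
      simp [QuadraticMap.polar]
    have key : ∀ j, ι (0 : QuadraticForm F V) (b j) *
        (b.coord j v • x - ι (0 : QuadraticForm F V) v * contractLeft (b.coord j) x)
        = b.coord j v • (ι (0 : QuadraticForm F V) (b j) * x)
          + ι (0 : QuadraticForm F V) v *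
            (ι (0 : QuadraticForm F V) (b j) * contractLeft (b.coord j) x) := by
      intro j
      rw [mul_sub, mul_smul_comm, ← mul_assoc, anti, neg_mul, mul_assoc, sub_neg_eq_add]
    simp only [contractLeft_ι_mul, key]
    rw [Finset.sum_add_distrib, ← Finset.mul_sum, ih]
    have hv : ∑ j, (b.coord j) v • (ι (0 : QuadraticForm F V)) (b j)
        = ι (0 : QuadraticForm F V) v := by
      simp_rw [← map_smul, ← map_sum, Module.Basis.coord_apply, Module.Basis.sum_repr]
    simp_rw [← smul_mul_assoc]
    rw [← Finset.sum_mul, hv, mul_smul_comm, Nat.succ_eq_add_one,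
      Nat.cast_add, Nat.cast_one, add_smul, one_smul, add_mul, smul_mul_assoc]
    abel

variable [CharZero F]

set_option maxHeartbeats 1000000 in
set_option synthInstance.maxHeartbeats 1000000 in
/-- An element of the exterior algebra all of whose contractions vanish is a scalar. -/
theorem aux_scalar [FiniteDimensional F V] (x : CliffordAlgebra (0 : QuadraticForm F V))
    (hx : ∀ d : Module.Dual F V, contractLeft d x = 0) :
    ∃ r : F, algebraMap F (CliffordAlgebra (0 : QuadraticForm F V)) r = x := by
  classical
  set b := Module.finBasis F V with hb
  have hN : ∀ (y : CliffordAlgebra (0 : QuadraticForm F V)) (i : ℕ),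
      (DirectSum.decompose (fun i : ℕ => ⋀[F]^i V)
        (∑ j, ι (0 : QuadraticForm F V) (b j) * contractLeft (b.coord j) y) i :
          ExteriorAlgebra F V)
      = (i : F) • (DirectSum.decompose (fun i : ℕ => ⋀[F]^i V) y i : ExteriorAlgebra F V) := by
    intro y
    refine DirectSum.Decomposition.inductionOn (fun i : ℕ => ⋀[F]^i V)
      (motive := fun y => ∀ i : ℕ, (DirectSum.decompose (fun i : ℕ => ⋀[F]^i V)
        (∑ j, ι (0 : QuadraticForm F V) (b j) * contractLeft (b.coord j) y) i :
          ExteriorAlgebra F V)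
      = (i : F) • (DirectSum.decompose (fun i : ℕ => ⋀[F]^i V) y i : ExteriorAlgebra F V))
      ?_ ?_ ?_ y
    · intro i; simp
    · rintro j ⟨z, hz⟩ i
      have hNz := aux_N b j z hz
      simp only [hNz]
      by_cases hij : i = j
      · subst hij
        rw [DirectSum.decompose_of_mem_same (fun i : ℕ => ⋀[F]^i V)
            (Submodule.smul_mem _ _ hz),
          DirectSum.decompose_of_mem_same (fun i : ℕ => ⋀[F]^i V) hz]
      · rw [DirectSum.decompose_of_mem_ne (fun i : ℕ => ⋀[F]^i V)
            (Submodule.smul_mem _ _ hz) (Ne.symm hij),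
          DirectSum.decompose_of_mem_ne (fun i : ℕ => ⋀[F]^i V) hz (Ne.symm hij)]
        simp
    · intro u w hu hw i
      simp only [map_add, mul_add, Finset.sum_add_distrib, DirectSum.decompose_add,
        DirectSum.add_apply, Submodule.coe_add, hu i, hw i, smul_add]
  have hzero : ∀ i : ℕ, i ≠ 0 →
      (DirectSum.decompose (fun i : ℕ => ⋀[F]^i V) x i : ExteriorAlgebra F V) = 0 := by
    intro i hi
    have h1 := hN x i
    have h2 : ∑ j, ι (0 : QuadraticForm F V) (b j) * contractLeft (b.coord j) x = 0 := by
      simp [hx]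
    rw [h2] at h1
    simp only [DirectSum.decompose_zero, DirectSum.zero_apply, ZeroMemClass.coe_zero] at h1
    have hine : (i : F) ≠ 0 := Nat.cast_ne_zero.mpr hi
    exact (smul_eq_zero.mp h1.symm).resolve_left hine
  have hx0 : x ∈ (⋀[F]^0 V : Submodule F (ExteriorAlgebra F V)) := by
    rw [show x = ∑ i ∈ (DirectSum.decompose (fun i : ℕ => ⋀[F]^i V) x).support,
        (DirectSum.decompose (fun i : ℕ => ⋀[F]^i V) x i : ExteriorAlgebra F V) from
      (DirectSum.sum_support_decompose _ x).symm]
    refine Submodule.sum_mem _ fun i _ => ?_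
    by_cases hi : i = 0
    · subst hi; exact (DirectSum.decompose (fun i : ℕ => ⋀[F]^i V) x 0).2
    · rw [hzero i hi]; exact Submodule.zero_mem _
  have hx1 : x ∈ (1 : Submodule F (CliffordAlgebra (0 : QuadraticForm F V))) := by
    simpa [pow_zero] using hx0
  obtain ⟨r, hr⟩ := Submodule.mem_one.mp hx1
  exact ⟨r, hr⟩

/-- The graded super-commutant of `ι(V)` in the Clifford algebra of a nondegenerate form
consists of scalars. -/
theorem aux_super [FiniteDimensional F V] (Q : QuadraticForm F V)
    (hQ : Q.polarBilin.Nondegenerate) (x : CliffordAlgebra Q)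
    (hx : ∀ v : V, ι Q v * x = involute x * ι Q v) :
    ∃ r : F, algebraMap F (CliffordAlgebra Q) r = x := by
  letI : Invertible (2 : F) := invertibleOfNonzero two_ne_zero
  have hc : ∀ d : Module.Dual F V, contractLeft d x = 0 := by
    intro d
    have hv : ∀ v : V, contractLeft (Q.polarBilin v) x = 0 := by
      intro v
      have h := aux_iota_mul Q v x
      rw [hx v] at h
      exact (left_eq_add.mp h)
    have hd : Q.polarBilin (((LinearMap.BilinForm.toDual Q.polarBilin hQ).symm d)) = d := by
      ext w
      rw [← LinearMap.BilinForm.toDual_def hQ, LinearEquiv.apply_symm_apply]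
    rw [← hd]
    exact hv _
  have hcy : ∀ d : Module.Dual F V, contractLeft d (equivExterior Q x) = 0 := by
    intro d
    rw [equivExterior, changeFormEquiv_apply, ← changeForm_contractLeft, hc, map_zero]
  obtain ⟨r, hr⟩ := aux_scalar (equivExterior Q x) hcy
  refine ⟨r, ?_⟩
  have hxy : x = (equivExterior Q).symm (equivExterior Q x) :=
    (LinearEquiv.symm_apply_apply _ _).symm
  rw [hxy, ← hr, equivExterior, changeFormEquiv_symm, changeFormEquiv_apply,
    changeForm_algebraMap]

/-- An involute-fixed element is even. -/
theorem aux_even {Q : QuadraticForm F V} {x : CliffordAlgebra Q} (h : involute x = x) :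
    x ∈ evenOdd Q 0 := by
  have htop : x ∈ (evenOdd Q 0 ⊔ evenOdd Q 1) := by
    rw [(evenOdd_isCompl Q).sup_eq_top]; trivial
  obtain ⟨y, hy, z, hz, rfl⟩ := Submodule.mem_sup.mp htop
  have h1 : y - z = y + z := by
    rw [← h, map_add, involute_eq_of_mem_even hy, involute_eq_of_mem_odd hz, sub_eq_add_neg]
  rw [sub_eq_add_neg] at h1
  have h2 : -z = z := add_left_cancel h1
  have h3 : (2 : F) • z = 0 := by rw [two_smul]; nth_rewrite 1 [← h2]; rw [neg_add_cancel]
  have hz2 : z = 0 := (smul_eq_zero.mp h3).resolve_left two_ne_zero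
  simpa [hz2] using hy

/-- An involute-negated element is odd. -/
theorem aux_odd {Q : QuadraticForm F V} {x : CliffordAlgebra Q} (h : involute x = -x) :
    x ∈ evenOdd Q 1 := by
  have htop : x ∈ (evenOdd Q 0 ⊔ evenOdd Q 1) := by
    rw [(evenOdd_isCompl Q).sup_eq_top]; trivial
  obtain ⟨y, hy, z, hz, rfl⟩ := Submodule.mem_sup.mp htop
  have h1 : y - z = -y + -z := by
    rw [← neg_add, ← h, map_add, involute_eq_of_mem_even hy, involute_eq_of_mem_odd hz,
      sub_eq_add_neg]
  rw [sub_eq_add_neg] at h1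
  have h2 : y = -y := add_right_cancel h1
  have h3 : (2 : F) • y = 0 := by rw [two_smul]; nth_rewrite 2 [h2]; rw [add_neg_cancel]
  have hy2 : y = 0 := (smul_eq_zero.mp h3).resolve_left two_ne_zero
  simpa [hy2] using hz

end Aux

/-- Let `F` be a field of characteristic zero, `V` a finite-dimensional `F`-vector space, and
`Q` a nondegenerate quadratic form on `V`. Then every element `g` of `GPin(V)` is
homogeneous for the `ℤ/2`-grading of the Clifford algebra: either `g` lies in the even
part `C⁺(V) = evenOdd Q 0` or in the odd part `C⁻(V) = evenOdd Q 1`.  In particular the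
sign character `sign : GPin(V) → {±1}` is well defined. -/
theorem GPin_element_is_homogeneous
    {F V : Type*} [Field F] [CharZero F] [AddCommGroup V] [Module F V]
    [FiniteDimensional F V] (Q : QuadraticForm F V) (hQ : Q.polarBilin.Nondegenerate)
    (g : (CliffordAlgebra Q)ˣ)
    (hg : (fun x => involute (g : CliffordAlgebra Q) * x *
        ((g⁻¹ : (CliffordAlgebra Q)ˣ) : CliffordAlgebra Q)) '' Set.range (ι Q) =
        Set.range (ι Q)) :
    (g : CliffordAlgebra Q) ∈ evenOdd Q 0 ∨ (g : CliffordAlgebra Q) ∈ evenOdd Q 1 := by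
  letI : Invertible (2 : F) := invertibleOfNonzero two_ne_zero
  set G : CliffordAlgebra Q := (g : CliffordAlgebra Q) with hGdef
  set Gi : CliffordAlgebra Q := ((g⁻¹ : (CliffordAlgebra Q)ˣ) : CliffordAlgebra Q) with hGidef
  have hGGi : G * Gi = 1 := g.mul_inv
  have hGiG : Gi * G = 1 := g.inv_mul
  -- the defining property, rephrased
  have himg : ∀ v : V, ∃ w, involute G * ι Q v * Gi = ι Q w := by
    intro v
    have hv : involute G * ι Q v * Gi ∈ Set.range (ι Q) := by
      rw [← hg]
      exact ⟨ι Q v, ⟨v, rfl⟩, rfl⟩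
    obtain ⟨w, hw⟩ := hv
    exact ⟨w, hw.symm⟩
  -- applying the grade involution to the defining property
  have hswap : ∀ v : V, G * ι Q v * involute Gi = involute G * ι Q v * Gi := by
    intro v
    obtain ⟨w, hw⟩ := himg v
    have h2 := congrArg involute hw
    simp only [map_mul, involute_involute, involute_ι, mul_neg, neg_mul, neg_inj] at h2
    rw [h2, hw]
  -- the element `u` super-commutes with all vectors
  have hinvu : involute (involute Gi * G) = Gi * involute G := by
    rw [map_mul, involute_involute]
  have hukey : ∀ v : V, ι Q v * (involute Gi * G)
      = involute (involute Gi * G) * ι Q v := by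
    intro v
    have h3 := congrArg (fun y => Gi * y * G) (hswap v)
    simp only [← mul_assoc] at h3
    rw [hGiG, one_mul] at h3
    rw [hinvu, ← mul_assoc, h3, mul_assoc, hGiG, mul_one]
  -- hence it is a scalar `r`
  obtain ⟨r, hr⟩ := aux_super Q hQ (involute Gi * G) hukey
  have hGu : G = involute G * (involute Gi * G) := by
    rw [← mul_assoc, ← map_mul, hGGi, map_one, one_mul]
  have hGr : G = r • involute G := by
    nth_rewrite 1 [hGu]
    rw [← hr, ← Algebra.commutes, ← Algebra.smul_def]
  have hinvG : involute G = r • G := by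
    calc involute G = involute (r • involute G) := congrArg involute hGr
      _ = r • involute (involute G) := map_smul _ _ _
      _ = r • G := by rw [involute_involute]
  have h2 : G = (r * r) • G := by
    nth_rewrite 1 [hGr, hinvG]
    rw [smul_smul]
  have hGne : G ≠ 0 := by
    intro h0
    rw [h0, zero_mul] at hGGi
    exact zero_ne_one hGGi
  have hr2 : r * r = 1 := by
    have h3 : (r * r - 1) • G = 0 := by
      rw [sub_smul, one_smul, ← h2, sub_self]
    rcases smul_eq_zero.mp h3 with h | h
    · exact sub_eq_zero.mp h
    · exact absurd h hGne
  rcases mul_self_eq_one_iff.mp hr2 with h1 | h1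
  · left
    exact aux_even (by rw [hinvG, h1, one_smul])
  · right
    exact aux_odd (by rw [hinvG, h1, neg_one_smul])
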